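/- Let n₁ > 1 and n₂ ≥ 1, and fix two vertices a₁, a₂ in the bipartite block A of size n₁ of the complete bipartite graph K_{n₁,n₂}. The number of acyclic orientations of K_{n₁,n₂} in which, for every vertex b of the other block B, the edge {a₁,b} is oriented in the same direction (towards or away from B) as the edge {a₂,b}, equals a(K_{n₁−1,n₂}). -/

import Mathlib

/-- An orientation of a simple graph `G`, encoded as a function `f` where `f u v = true`
means the edge `{u,v}` is directed from `u` to `v`. Every edge gets exactly one direction,
and non-edges carry no direction. -/
def IsOrientation {V : Type*} (G : SimpleGraph V) (f : V → V → Bool) : Prop :=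
  (∀ u v, G.Adj u v → f u v = !f v u) ∧ ∀ u v, ¬ G.Adj u v → f u v = false

/-- The directed graph given by `f` contains no directed cycle. -/
def OrientAcyclic {V : Type*} (f : V → V → Bool) : Prop :=
  ∀ v, ¬ Relation.TransGen (fun a b => f a b = true) v v

/-- The number of acyclic orientations of `G`. -/
noncomputable def numAcyclicOrientations {V : Type*} (G : SimpleGraph V) : ℕ :=
  Nat.card {f : V → V → Bool // IsOrientation G f ∧ OrientAcyclic f}

/-- The Stirling number of the second kind `S(n,k)`: the number of partitions of an
`n`-element set into `k` non-empty parts. -/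
noncomputable def stirling2 (n k : ℕ) : ℕ :=
  Nat.card {P : Finpartition (Finset.univ : Finset (Fin n)) // P.parts.card = k}
/-- For `n₁ > 1` and distinct vertices `a₁, a₂` in the block of size `n₁` of `K_{n₁,n₂}`,
the number of acyclic orientations in which every edge `{a₁,b}` is oriented the same way as
`{a₂,b}` equals `a(K_{n₁−1,n₂})`. -/
theorem card_acyclic_with_equivalent_pair (n₁ n₂ : ℕ) (h₁ : 1 < n₁) (h₂ : 1 ≤ n₂)
    (a₁ a₂ : Fin n₁) (ha : a₁ ≠ a₂) :
    Nat.card {f : (Fin n₁ ⊕ Fin n₂) → (Fin n₁ ⊕ Fin n₂) → Bool //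
        IsOrientation (completeBipartiteGraph (Fin n₁) (Fin n₂)) f ∧ OrientAcyclic f ∧
          ∀ b : Fin n₂, f (Sum.inl a₁) (Sum.inr b) = f (Sum.inl a₂) (Sum.inr b)} =
      numAcyclicOrientations (completeBipartiteGraph (Fin (n₁ - 1)) (Fin n₂)) := by
  have hm : n₁ = (n₁ - 1) + 1 := by omega
  let e : Fin n₁ ≃ Option (Fin (n₁ - 1)) := (finCongr hm).trans (finSuccEquiv' (Fin.cast hm a₂))
  have hea₂ : e a₂ = none := by
    show finSuccEquiv' (Fin.cast hm a₂) (finCongr hm a₂) = none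
    rw [finCongr_apply]
    exact finSuccEquiv'_at _
  obtain ⟨a₁', ha₁'⟩ : ∃ w, e a₁ = some w := by
    cases hh : e a₁ with
    | none => exact absurd (e.injective (hh.trans hea₂.symm)) ha
    | some w => exact ⟨w, rfl⟩
  let π : Fin n₁ → Fin (n₁ - 1) := fun v => (e v).getD a₁'
  let ι : Fin (n₁-1) ⊕ Fin n₂ → Fin n₁ ⊕ Fin n₂ := Sum.map (fun w => e.symm (some w)) id
  let pp : Fin n₁ ⊕ Fin n₂ → Fin (n₁-1) ⊕ Fin n₂ := Sum.map π id
  have hsymm : e.symm (some a₁') = a₁ := by rw [← ha₁', Equiv.symm_apply_apply]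
  have hpι : ∀ x, pp (ι x) = x := by
    rintro (w | b)
    · show Sum.inl ((e (e.symm (some w))).getD a₁') = Sum.inl w
      rw [Equiv.apply_symm_apply]
      rfl
    · rfl
  have hσ₂ : ι (pp (Sum.inl a₂)) = Sum.inl a₁ := by
    show Sum.inl (e.symm (some ((e a₂).getD a₁'))) = Sum.inl a₁
    rw [hea₂]
    exact congrArg _ hsymm
  have hσfix : ∀ v : Fin n₁, v ≠ a₂ → ι (pp (Sum.inl v)) = Sum.inl v := by
    intro v hv
    obtain ⟨w, hw⟩ : ∃ w, e v = some w := by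
      cases hh : e v with
      | none => exact absurd (e.injective (hh.trans hea₂.symm)) hv
      | some w => exact ⟨w, rfl⟩
    show Sum.inl (e.symm (some ((e v).getD a₁'))) = Sum.inl v
    rw [hw]
    show Sum.inl (e.symm (some w)) = Sum.inl v
    rw [← hw, Equiv.symm_apply_apply]
  have hadjι : ∀ x y, (completeBipartiteGraph (Fin (n₁ - 1)) (Fin n₂)).Adj x y ↔
      (completeBipartiteGraph (Fin n₁) (Fin n₂)).Adj (ι x) (ι y) := by
    rintro (x | x) (y | y) <;> simp [ι]
  have hadjp : ∀ x y, (completeBipartiteGraph (Fin n₁) (Fin n₂)).Adj x y ↔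
      (completeBipartiteGraph (Fin (n₁ - 1)) (Fin n₂)).Adj (pp x) (pp y) := by
    rintro (x | x) (y | y) <;> simp [pp]
  rw [numAcyclicOrientations]
  refine Nat.card_congr
    { toFun := fun f => ⟨fun x y => f.1 (ι x) (ι y),
        ⟨fun u v h => f.2.1.1 _ _ ((hadjι u v).1 h),
         fun u v h => f.2.1.2 _ _ (fun hh => h ((hadjι u v).2 hh))⟩,
        fun v hv => f.2.2.1 (ι v) (Relation.TransGen.lift ι (fun a b hab => hab) _ _ hv)⟩
      invFun := fun g => ⟨fun x y => g.1 (pp x) (pp y),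
        ⟨fun u v h => g.2.1.1 _ _ ((hadjp u v).1 h),
         fun u v h => g.2.1.2 _ _ (fun hh => h ((hadjp u v).2 hh))⟩,
        fun v hv => g.2.2 (pp v) (Relation.TransGen.lift pp (fun a b hab => hab) _ _ hv),
        fun b => by
          have h12 : pp (Sum.inl a₁) = pp (Sum.inl a₂) := by
            show Sum.inl ((e a₁).getD a₁') = Sum.inl ((e a₂).getD a₁')
            rw [ha₁', hea₂]
            rfl
          show g.1 (pp (Sum.inl a₁)) (pp (Sum.inr b)) = g.1 (pp (Sum.inl a₂)) (pp (Sum.inr b))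
          rw [h12]⟩
      left_inv := ?_
      right_inv := ?_ }
  · rintro ⟨f, horient, hacyc, hcond⟩
    apply Subtype.ext
    funext x y
    show f (ι (pp x)) (ι (pp y)) = f x y
    have hfalseL : ∀ (u w : Fin n₁), f (Sum.inl u) (Sum.inl w) = false := fun u w =>
      horient.2 _ _ (by simp)
    have hσinl : ∀ v : Fin n₁, ∃ u, ι (pp (Sum.inl v)) = Sum.inl u := by
      intro v; exact ⟨_, rfl⟩
    rcases x with v | b
    · rcases y with v' | b'
      · obtain ⟨u, hu⟩ := hσinl v
        obtain ⟨u', hu'⟩ := hσinl v'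
        rw [hu, hu', hfalseL, hfalseL]
      · show f (ι (pp (Sum.inl v))) (Sum.inr b') = f (Sum.inl v) (Sum.inr b')
        by_cases hv : v = a₂
        · rw [hv, hσ₂]
          exact hcond b'
        · rw [hσfix v hv]
    · rcases y with v' | b'
      · show f (Sum.inr b) (ι (pp (Sum.inl v'))) = f (Sum.inr b) (Sum.inl v')
        by_cases hv : v' = a₂
        · rw [hv, hσ₂]
          have adj1 : (completeBipartiteGraph (Fin n₁) (Fin n₂)).Adj (Sum.inr b) (Sum.inl a₁) :=
            by simp
          have adj2 : (completeBipartiteGraph (Fin n₁) (Fin n₂)).Adj (Sum.inr b) (Sum.inl a₂) :=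
            by simp
          rw [horient.1 _ _ adj1, horient.1 _ _ adj2, hcond b]
        · rw [hσfix v' hv]
      · rfl
  · rintro ⟨g, hg⟩
    apply Subtype.ext
    funext x y
    show g (pp (ι x)) (pp (ι y)) = g x y
    rw [hpι, hpι]
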